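/- arXiv:2201.07925 — 2 statements merged into one kernel-verified Lean document; each statement's English description precedes it below -/
import Mathlib

section
/- Let Γ ∈ ℝ^{d×d} be symmetric positive definite, y ∈ ℝᵈ, and F, \tilde{F} : ℝⁿ → ℝᵈ. For sample points m₁,…,m_N ∈ ℝⁿ, define π̂ = (1/N)∑_j exp(-(1/2)‖y - F(m_j)‖²_{Γ⁻¹}) and π̃ = (1/N)∑_j exp(-(1/2)‖y - \tilde{F}(m_j)‖²_{Γ⁻¹}). Then |π̂ - π̃| ≤ C · ( (1/N) ∑_j ‖F(m_j) - \tilde{F}(m_j)‖² )^{1/2}, where C = ‖Γ⁻¹‖ ( 2‖y‖ + ((1/N)∑_j ‖F(m_j)‖²)^{1/2} + ((1/N)∑_j ‖\tilde{F}(m_j)‖²)^{1/2} ) and ‖v‖²_{Γ⁻¹} := vᵀΓ⁻¹v. -/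
open scoped InnerProductSpace

lemma exp_lip {x y : ℝ} (hx : x ≤ 0) (hy : y ≤ 0) :
    |Real.exp x - Real.exp y| ≤ |x - y| := by
  wlog h : y ≤ x generalizing x y
  · rw [abs_sub_comm, abs_sub_comm x y]; exact this hy hx (le_of_not_ge h)
  have h1 : Real.exp y = Real.exp (y - x) * Real.exp x := by
    rw [← Real.exp_add]; ring_nf
  have h2 : Real.exp x ≤ 1 := Real.exp_le_one_iff.2 hx
  have h3 : (0:ℝ) < Real.exp x := Real.exp_pos x
  have h4 : y - x + 1 ≤ Real.exp (y - x) := Real.add_one_le_exp _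
  have h5 : Real.exp y ≤ Real.exp x := Real.exp_le_exp.2 h
  rw [abs_of_nonneg (by linarith), abs_of_nonneg (by linarith)]
  nlinarith

lemma avg_cs {N : ℕ} (e f : Fin N → ℝ) (he : ∀ j, 0 ≤ e j) (hf : ∀ j, 0 ≤ f j) :
    (1/(N:ℝ)) * ∑ j, e j * f j ≤
      Real.sqrt ((1/(N:ℝ)) * ∑ j, e j ^ 2) * Real.sqrt ((1/(N:ℝ)) * ∑ j, f j ^ 2) := by
  have hcs := Finset.sum_mul_sq_le_sq_mul_sq Finset.univ e f
  have hL : 0 ≤ (1/(N:ℝ)) * ∑ j, e j * f j := by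
    apply mul_nonneg (by positivity)
    exact Finset.sum_nonneg fun j _ => mul_nonneg (he j) (hf j)
  have he2 : (0:ℝ) ≤ ∑ j, e j ^ 2 := Finset.sum_nonneg fun j _ => sq_nonneg _
  have hf2 : (0:ℝ) ≤ ∑ j, f j ^ 2 := Finset.sum_nonneg fun j _ => sq_nonneg _
  rw [← Real.sqrt_mul (by positivity)]
  rw [Real.le_sqrt hL (by positivity)]
  have hN : (0:ℝ) ≤ 1/(N:ℝ) := by positivity
  calc ((1/(N:ℝ)) * ∑ j, e j * f j) ^ 2
      = (1/(N:ℝ))^2 * (∑ j, e j * f j)^2 := by ring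
    _ ≤ (1/(N:ℝ))^2 * ((∑ j, e j ^ 2) * ∑ j, f j ^ 2) := by gcongr
    _ = (1/(N:ℝ) * ∑ j, e j ^ 2) * (1/(N:ℝ) * ∑ j, f j ^ 2) := by ring

theorem evidence_estimator_error_bound (n d N : ℕ) (hN : 0 < N)
    (Γ : Matrix (Fin d) (Fin d) ℝ) (hΓsymm : Γ.IsSymm) (hΓpd : Γ.PosDef)
    (y : EuclideanSpace ℝ (Fin d))
    (F Ft : EuclideanSpace ℝ (Fin n) → EuclideanSpace ℝ (Fin d))
    (m : Fin N → EuclideanSpace ℝ (Fin n)) :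
    |(1 / (N : ℝ)) * ∑ j, Real.exp (-(1 / 2) *
        ⟪y - F (m j), Matrix.toEuclideanCLM (𝕜 := ℝ) Γ⁻¹ (y - F (m j))⟫_ℝ) -
      (1 / (N : ℝ)) * ∑ j, Real.exp (-(1 / 2) *
        ⟪y - Ft (m j), Matrix.toEuclideanCLM (𝕜 := ℝ) Γ⁻¹ (y - Ft (m j))⟫_ℝ)| ≤
    (‖Matrix.toEuclideanCLM (𝕜 := ℝ) Γ⁻¹‖ *
        (2 * ‖y‖ + Real.sqrt ((1 / (N : ℝ)) * ∑ j, ‖F (m j)‖ ^ 2) +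
          Real.sqrt ((1 / (N : ℝ)) * ∑ j, ‖Ft (m j)‖ ^ 2))) *
      Real.sqrt ((1 / (N : ℝ)) * ∑ j, ‖F (m j) - Ft (m j)‖ ^ 2) := by
  set A := Matrix.toEuclideanCLM (𝕜 := ℝ) Γ⁻¹ with hAdef
  have hinv : (Γ⁻¹).PosDef := hΓpd.inv
  -- nonnegativity of the quadratic form
  have hq : ∀ v : EuclideanSpace ℝ (Fin d), 0 ≤ ⟪v, A v⟫_ℝ := by
    intro v
    have := hinv.posSemidef.dotProduct_mulVec_nonneg (WithLp.equiv 2 _ v)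
    simpa [hAdef, Matrix.inner_toEuclideanCLM] using this
  -- symmetry
  have hsym : ∀ u v : EuclideanSpace ℝ (Fin d), ⟪u, A v⟫_ℝ = ⟪A u, v⟫_ℝ := by
    intro u v
    have hH : (Γ⁻¹).IsHermitian := hinv.1
    exact ((Matrix.isHermitian_iff_isSymmetric.mp hH) u v).symm
  have hK : 0 ≤ ‖A‖ := norm_nonneg _
  -- quadratic form difference bound
  have hqd : ∀ a b : EuclideanSpace ℝ (Fin d),
      |⟪a, A a⟫_ℝ - ⟪b, A b⟫_ℝ| ≤ ‖A‖ * (‖a - b‖ * ‖a + b‖) := by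
    intro a b
    have h2 : ⟪a, A b⟫_ℝ = ⟪b, A a⟫_ℝ := by
      rw [hsym a b, real_inner_comm]
    have h1 : ⟪a, A a⟫_ℝ - ⟪b, A b⟫_ℝ = ⟪a - b, A (a + b)⟫_ℝ := by
      rw [map_add, inner_sub_left, inner_add_right, inner_add_right]
      linarith
    rw [h1]
    calc |⟪a - b, A (a + b)⟫_ℝ| ≤ ‖a - b‖ * ‖A (a + b)‖ := abs_real_inner_le_norm _ _
      _ ≤ ‖a - b‖ * (‖A‖ * ‖a + b‖) := by
          gcongr; exact A.le_opNorm _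
      _ = ‖A‖ * (‖a - b‖ * ‖a + b‖) := by ring
  -- per-sample bound
  set e : Fin N → ℝ := fun j => ‖F (m j) - Ft (m j)‖ with hedef
  set f : Fin N → ℝ := fun j => ‖F (m j)‖ with hfdef
  set g : Fin N → ℝ := fun j => ‖Ft (m j)‖ with hgdef
  have hper : ∀ j, |Real.exp (-(1 / 2) * ⟪y - F (m j), A (y - F (m j))⟫_ℝ) -
      Real.exp (-(1 / 2) * ⟪y - Ft (m j), A (y - Ft (m j))⟫_ℝ)| ≤
      (1/2) * ‖A‖ * (e j * (2 * ‖y‖ + f j + g j)) := by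
    intro j
    set a := y - F (m j)
    set b := y - Ft (m j)
    have hab : ‖a - b‖ = e j := by
      have : a - b = Ft (m j) - F (m j) := by simp [a, b]; try abel
      rw [this, norm_sub_rev]
    have hsum : ‖a + b‖ ≤ 2 * ‖y‖ + f j + g j := by
      calc ‖a + b‖ ≤ ‖a‖ + ‖b‖ := norm_add_le _ _
        _ ≤ (‖y‖ + ‖F (m j)‖) + (‖y‖ + ‖Ft (m j)‖) := by
            gcongr <;> exact norm_sub_le _ _
        _ = 2 * ‖y‖ + f j + g j := by ring
    calc |Real.exp (-(1 / 2) * ⟪a, A a⟫_ℝ) - Real.exp (-(1 / 2) * ⟪b, A b⟫_ℝ)|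
        ≤ |(-(1 / 2) * ⟪a, A a⟫_ℝ) - (-(1 / 2) * ⟪b, A b⟫_ℝ)| := by
          apply exp_lip
          · have := hq a; nlinarith
          · have := hq b; nlinarith
      _ = (1/2) * |⟪a, A a⟫_ℝ - ⟪b, A b⟫_ℝ| := by
          rw [show (-(1 / 2) * ⟪a, A a⟫_ℝ) - (-(1 / 2) * ⟪b, A b⟫_ℝ)
            = (-(1/2)) * (⟪a, A a⟫_ℝ - ⟪b, A b⟫_ℝ) by ring, abs_mul]
          norm_num
      _ ≤ (1/2) * (‖A‖ * (‖a - b‖ * ‖a + b‖)) := by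
          gcongr; exact hqd a b
      _ = (1/2) * ‖A‖ * (e j * ‖a + b‖) := by rw [hab]; ring
      _ ≤ (1/2) * ‖A‖ * (e j * (2 * ‖y‖ + f j + g j)) := by
          have h0 : 0 ≤ e j := norm_nonneg _
          nlinarith [mul_nonneg (mul_nonneg hK h0) (sub_nonneg.mpr hsum)]
  -- sum up
  have hNpos : (0:ℝ) < (N:ℝ) := by exact_mod_cast hN
  have step1 : |(1 / (N : ℝ)) * ∑ j, Real.exp (-(1 / 2) * ⟪y - F (m j), A (y - F (m j))⟫_ℝ) -
      (1 / (N : ℝ)) * ∑ j, Real.exp (-(1 / 2) * ⟪y - Ft (m j), A (y - Ft (m j))⟫_ℝ)| ≤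
      (1 / (N : ℝ)) * ∑ j, ((1/2) * ‖A‖ * (e j * (2 * ‖y‖ + f j + g j))) := by
    rw [← mul_sub, ← Finset.sum_sub_distrib, abs_mul, abs_of_nonneg (by positivity : (0:ℝ) ≤ 1/(N:ℝ))]
    gcongr
    exact (Finset.abs_sum_le_sum_abs _ _).trans (Finset.sum_le_sum fun j _ => hper j)
  have he0 : ∀ j, 0 ≤ e j := fun j => norm_nonneg _
  have hf0 : ∀ j, 0 ≤ f j := fun j => norm_nonneg _
  have hg0 : ∀ j, 0 ≤ g j := fun j => norm_nonneg _
  -- rewrite the averaged sum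
  have step2 : (1 / (N : ℝ)) * ∑ j, ((1/2) * ‖A‖ * (e j * (2 * ‖y‖ + f j + g j))) =
      (1/2) * ‖A‖ * (2 * ‖y‖ * ((1/(N:ℝ)) * ∑ j, e j * 1) +
        (1/(N:ℝ)) * ∑ j, e j * f j + (1/(N:ℝ)) * ∑ j, e j * g j) := by
    have : ∀ j : Fin N, (1/2) * ‖A‖ * (e j * (2 * ‖y‖ + f j + g j)) =
        (1/2) * ‖A‖ * (2 * ‖y‖ * (e j * 1)) + (1/2) * ‖A‖ * (e j * f j)
          + (1/2) * ‖A‖ * (e j * g j) := fun j => by ring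
    simp_rw [this, Finset.sum_add_distrib, ← Finset.mul_sum]
    ring
  set E := Real.sqrt ((1/(N:ℝ)) * ∑ j, e j ^ 2) with hE
  set Fr := Real.sqrt ((1/(N:ℝ)) * ∑ j, f j ^ 2) with hFr
  set G := Real.sqrt ((1/(N:ℝ)) * ∑ j, g j ^ 2) with hG
  have cs1 : (1/(N:ℝ)) * ∑ j, e j * 1 ≤ E := by
    have := avg_cs e (fun _ => 1) he0 (fun _ => zero_le_one)
    have hone : Real.sqrt ((1/(N:ℝ)) * ∑ _j : Fin N, (1:ℝ) ^ 2) = 1 := by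
      simp only [one_pow, Finset.sum_const, Finset.card_univ, Fintype.card_fin, nsmul_eq_mul,
        mul_one]
      rw [one_div, inv_mul_cancel₀ (ne_of_gt hNpos), Real.sqrt_one]
    rw [hone, mul_one] at this
    exact this
  have cs2 : (1/(N:ℝ)) * ∑ j, e j * f j ≤ E * Fr := avg_cs e f he0 hf0
  have cs3 : (1/(N:ℝ)) * ∑ j, e j * g j ≤ E * G := avg_cs e g he0 hg0
  have hE0 : 0 ≤ E := Real.sqrt_nonneg _
  have hFr0 : 0 ≤ Fr := Real.sqrt_nonneg _
  have hG0 : 0 ≤ G := Real.sqrt_nonneg _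
  have hy0 : 0 ≤ ‖y‖ := norm_nonneg _
  calc |(1 / (N : ℝ)) * ∑ j, Real.exp (-(1 / 2) * ⟪y - F (m j), A (y - F (m j))⟫_ℝ) -
      (1 / (N : ℝ)) * ∑ j, Real.exp (-(1 / 2) * ⟪y - Ft (m j), A (y - Ft (m j))⟫_ℝ)|
      ≤ (1 / (N : ℝ)) * ∑ j, ((1/2) * ‖A‖ * (e j * (2 * ‖y‖ + f j + g j))) := step1
    _ = (1/2) * ‖A‖ * (2 * ‖y‖ * ((1/(N:ℝ)) * ∑ j, e j * 1) +
        (1/(N:ℝ)) * ∑ j, e j * f j + (1/(N:ℝ)) * ∑ j, e j * g j) := step2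
    _ ≤ (1/2) * ‖A‖ * (2 * ‖y‖ * E + E * Fr + E * G) := by
        gcongr <;> first | exact cs1 | exact cs2 | exact cs3 | positivity
    _ ≤ (‖A‖ * (2 * ‖y‖ + Fr + G)) * E := by
        nlinarith [mul_nonneg (mul_nonneg hK hE0) hy0, mul_nonneg (mul_nonneg hK hE0) hFr0,
          mul_nonneg (mul_nonneg hK hE0) hG0]
end

section
/- Let Γ ∈ ℝ^{d×d} be symmetric positive definite, y ∈ ℝᵈ, a₁,…,a_N, b₁,…,b_N ∈ ℝᵈ. Suppose (1/N)∑_j exp(-(1/2)‖y - a_j‖²_{Γ⁻¹}) ≥ c and (1/N)∑_j exp(-(1/2)‖y - b_j‖²_{Γ⁻¹}) ≥ c for some c > 0. Then | log((1/N)∑_j exp(-(1/2)‖y-a_j‖²_{Γ⁻¹})) - log((1/N)∑_j exp(-(1/2)‖y-b_j‖²_{Γ⁻¹})) | ≤ (1/c) ‖Γ⁻¹‖ (2‖y‖ + max_j ‖a_j‖ + max_j ‖b_j‖) · max_j ‖a_j - b_j‖. -/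
open scoped InnerProductSpace

private lemma exp_lip_s13 {s t : ℝ} (hs : s ≤ 0) (ht : t ≤ 0) :
    |Real.exp s - Real.exp t| ≤ |s - t| := by
  wlog h : t ≤ s generalizing s t
  · rw [abs_sub_comm, abs_sub_comm s t]; exact this ht hs (le_of_not_ge h)
  rw [abs_of_nonneg (sub_nonneg.2 (Real.exp_le_exp.2 h)), abs_of_nonneg (sub_nonneg.2 h)]
  have h1 : 1 - Real.exp (t - s) ≤ s - t := by linarith [Real.add_one_le_exp (t - s)]
  have h2 : Real.exp s * (1 - Real.exp (t - s)) = Real.exp s - Real.exp t := by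
    rw [mul_sub, mul_one, ← Real.exp_add]; ring_nf
  have h3 : Real.exp s * (1 - Real.exp (t - s)) ≤ Real.exp s * (s - t) :=
    mul_le_mul_of_nonneg_left h1 (Real.exp_nonneg s)
  have h4 : Real.exp s * (s - t) ≤ s - t :=
    mul_le_of_le_one_left (sub_nonneg.2 h) (Real.exp_le_one_iff.2 hs)
  linarith

private lemma log_lip {A B c : ℝ} (hc : 0 < c) (hA : c ≤ A) (hB : c ≤ B) :
    |Real.log A - Real.log B| ≤ (1 / c) * |A - B| := by
  wlog h : B ≤ A generalizing A B
  · rw [abs_sub_comm, abs_sub_comm A B]; exact this hB hA (le_of_not_ge h)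
  have hApos : 0 < A := lt_of_lt_of_le hc hA
  have hBpos : 0 < B := lt_of_lt_of_le hc hB
  rw [abs_of_nonneg (sub_nonneg.2 (Real.log_le_log hBpos h)),
    abs_of_nonneg (sub_nonneg.2 h), ← Real.log_div (ne_of_gt hApos) (ne_of_gt hBpos)]
  have h1 : Real.log (A / B) ≤ A / B - 1 :=
    Real.log_le_sub_one_of_pos (div_pos hApos hBpos)
  have h2 : A / B - 1 = (A - B) / B := by field_simp
  have h3 : (A - B) / B ≤ (A - B) / c :=
    div_le_div_of_nonneg_left (sub_nonneg.2 h) hc hB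
  calc Real.log (A / B) ≤ (A - B) / c := by linarith
  _ = (1 / c) * (A - B) := by ring

set_option maxHeartbeats 1000000 in
set_option synthInstance.maxHeartbeats 200000 in
theorem log_evidence_error_bound (d N : ℕ) (hN : 0 < N)
    (Γ : Matrix (Fin d) (Fin d) ℝ) (hΓsymm : Γ.IsSymm) (hΓpd : Γ.PosDef)
    (y : EuclideanSpace ℝ (Fin d)) (a b : Fin N → EuclideanSpace ℝ (Fin d))
    (c : ℝ) (hc : 0 < c)
    (ha : c ≤ (1 / (N : ℝ)) * ∑ j, Real.exp (-(1 / 2) *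
        ⟪y - a j, Matrix.toEuclideanCLM (𝕜 := ℝ) Γ⁻¹ (y - a j)⟫_ℝ))
    (hb : c ≤ (1 / (N : ℝ)) * ∑ j, Real.exp (-(1 / 2) *
        ⟪y - b j, Matrix.toEuclideanCLM (𝕜 := ℝ) Γ⁻¹ (y - b j)⟫_ℝ)) :
    |Real.log ((1 / (N : ℝ)) * ∑ j, Real.exp (-(1 / 2) *
        ⟪y - a j, Matrix.toEuclideanCLM (𝕜 := ℝ) Γ⁻¹ (y - a j)⟫_ℝ)) -
      Real.log ((1 / (N : ℝ)) * ∑ j, Real.exp (-(1 / 2) *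
        ⟪y - b j, Matrix.toEuclideanCLM (𝕜 := ℝ) Γ⁻¹ (y - b j)⟫_ℝ))| ≤
    (1 / c) * ‖Matrix.toEuclideanCLM (𝕜 := ℝ) Γ⁻¹‖ *
      (2 * ‖y‖ + (⨆ j, ‖a j‖) + (⨆ j, ‖b j‖)) * (⨆ j, ‖a j - b j‖) := by
  haveI : Nonempty (Fin N) := ⟨⟨0, hN⟩⟩
  set M := Matrix.toEuclideanCLM (𝕜 := ℝ) Γ⁻¹ with hM
  -- positive semidefiniteness of the quadratic form
  have hpsd : (Γ⁻¹).PosSemidef := hΓpd.inv.posSemidef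
  have hQ0 : ∀ x : EuclideanSpace ℝ (Fin d), 0 ≤ ⟪x, M x⟫_ℝ := by
    intro x
    have := hpsd.re_dotProduct_nonneg (WithLp.equiv _ _ x)
    simpa [EuclideanSpace.inner_eq_star_dotProduct, hM, Matrix.ofLp_toEuclideanCLM, Matrix.toLin'_apply, dotProduct_comm] using this
  -- symmetry of M
  have hherm : (Γ⁻¹).IsHermitian := hΓpd.inv.isHermitian
  have hsym : ∀ u v : EuclideanSpace ℝ (Fin d), ⟪M u, v⟫_ℝ = ⟪u, M v⟫_ℝ := by
    have := Matrix.isHermitian_iff_isSymmetric.mp hherm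
    intro u v
    have h := this u v
    simpa [← Matrix.coe_toEuclideanCLM_eq_toEuclideanLin] using h
  -- quadratic form difference
  have hquad : ∀ u v : EuclideanSpace ℝ (Fin d),
      |⟪u, M u⟫_ℝ - ⟪v, M v⟫_ℝ| ≤ ‖M‖ * (‖u + v‖ * ‖u - v‖) := by
    intro u v
    have key : ⟪u, M u⟫_ℝ - ⟪v, M v⟫_ℝ = ⟪u - v, M (u + v)⟫_ℝ := by
      have h1 : ⟪u, M v⟫_ℝ = ⟪v, M u⟫_ℝ := by
        rw [← hsym u v, real_inner_comm]
      simp only [map_add, inner_sub_left, inner_add_right]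
      linarith
    rw [key]
    calc |⟪u - v, M (u + v)⟫_ℝ| ≤ ‖u - v‖ * ‖M (u + v)‖ := abs_real_inner_le_norm _ _
    _ ≤ ‖u - v‖ * (‖M‖ * ‖u + v‖) :=
        mul_le_mul_of_nonneg_left (M.le_opNorm _) (norm_nonneg _)
    _ = ‖M‖ * (‖u + v‖ * ‖u - v‖) := by ring
  -- sup bounds
  have hbdd : ∀ f : Fin N → ℝ, BddAbove (Set.range f) := fun f => Set.Finite.bddAbove
    (Set.finite_range f)
  have hsupa : ∀ j, ‖a j‖ ≤ ⨆ j, ‖a j‖ := fun j => le_ciSup (f := fun j => ‖a j‖) (hbdd _) j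
  have hsupb : ∀ j, ‖b j‖ ≤ ⨆ j, ‖b j‖ := fun j => le_ciSup (f := fun j => ‖b j‖) (hbdd _) j
  have hsupab : ∀ j, ‖a j - b j‖ ≤ ⨆ j, ‖a j - b j‖ := fun j => le_ciSup (f := fun j => ‖a j - b j‖) (hbdd _) j
  set S := ⨆ j, ‖a j - b j‖ with hS
  set K := 2 * ‖y‖ + (⨆ j, ‖a j‖) + (⨆ j, ‖b j‖) with hK
  have hS0 : 0 ≤ S := le_trans (norm_nonneg _) (hsupab ⟨0, hN⟩)
  have hK0 : 0 ≤ K := by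
    have h1 := le_trans (norm_nonneg _) (hsupa ⟨0, hN⟩)
    have h2 := le_trans (norm_nonneg _) (hsupb ⟨0, hN⟩)
    have := norm_nonneg y
    positivity
  -- per-term bound
  have hterm : ∀ j : Fin N,
      |Real.exp (-(1 / 2) * ⟪y - a j, M (y - a j)⟫_ℝ) -
        Real.exp (-(1 / 2) * ⟪y - b j, M (y - b j)⟫_ℝ)| ≤ ‖M‖ * K * S := by
    intro j
    have h1 : (-(1 / 2) * ⟪y - a j, M (y - a j)⟫_ℝ) ≤ 0 := by
      have := hQ0 (y - a j); nlinarith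
    have h2 : (-(1 / 2) * ⟪y - b j, M (y - b j)⟫_ℝ) ≤ 0 := by
      have := hQ0 (y - b j); nlinarith
    calc |Real.exp (-(1 / 2) * ⟪y - a j, M (y - a j)⟫_ℝ) -
        Real.exp (-(1 / 2) * ⟪y - b j, M (y - b j)⟫_ℝ)|
        ≤ |(-(1 / 2) * ⟪y - a j, M (y - a j)⟫_ℝ) -
          (-(1 / 2) * ⟪y - b j, M (y - b j)⟫_ℝ)| := exp_lip_s13 h1 h2
      _ = (1 / 2) * |⟪y - a j, M (y - a j)⟫_ℝ - ⟪y - b j, M (y - b j)⟫_ℝ| := by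
          rw [show -(1/2) * ⟪y - a j, M (y - a j)⟫_ℝ - -(1/2) * ⟪y - b j, M (y - b j)⟫_ℝ
              = (1/2) * (⟪y - b j, M (y - b j)⟫_ℝ - ⟪y - a j, M (y - a j)⟫_ℝ) from by ring,
            abs_mul, abs_of_nonneg (by norm_num : (0:ℝ) ≤ (1:ℝ)/2), abs_sub_comm]
      _ ≤ (1 / 2) * (‖M‖ * (‖(y - a j) + (y - b j)‖ * ‖(y - a j) - (y - b j)‖)) := by
          have := hquad (y - a j) (y - b j)
          linarith
      _ ≤ (1 / 2) * (‖M‖ * (K * S)) := by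
          have hnorm1 : ‖(y - a j) + (y - b j)‖ ≤ K := by
            calc ‖(y - a j) + (y - b j)‖ ≤ ‖y - a j‖ + ‖y - b j‖ := norm_add_le _ _
            _ ≤ (‖y‖ + ‖a j‖) + (‖y‖ + ‖b j‖) := by
                gcongr <;> exact norm_sub_le _ _
            _ ≤ K := by have := hsupa j; have := hsupb j; rw [hK]; linarith
          have hnorm2 : ‖(y - a j) - (y - b j)‖ ≤ S := by
            have : (y - a j) - (y - b j) = b j - a j := by abel
            rw [this, norm_sub_rev]; exact hsupab j
          have h3 : ‖(y - a j) + (y - b j)‖ * ‖(y - a j) - (y - b j)‖ ≤ K * S :=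
            mul_le_mul hnorm1 hnorm2 (norm_nonneg _) hK0
          exact mul_le_mul_of_nonneg_left
            (mul_le_mul_of_nonneg_left h3 (norm_nonneg M)) (by norm_num)
      _ ≤ 1 * (‖M‖ * (K * S)) := by
          have h4 : 0 ≤ ‖M‖ * (K * S) := mul_nonneg (norm_nonneg M) (mul_nonneg hK0 hS0)
          exact mul_le_mul_of_nonneg_right (by norm_num) h4
      _ = ‖M‖ * K * S := by ring
  -- combine
  set A := (1 / (N : ℝ)) * ∑ j, Real.exp (-(1 / 2) * ⟪y - a j, M (y - a j)⟫_ℝ) with hA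
  set B := (1 / (N : ℝ)) * ∑ j, Real.exp (-(1 / 2) * ⟪y - b j, M (y - b j)⟫_ℝ) with hB
  have hAB : |A - B| ≤ ‖M‖ * K * S := by
    have hNpos : (0:ℝ) < N := Nat.cast_pos.mpr hN
    have : A - B = (1 / (N : ℝ)) * ∑ j, (Real.exp (-(1 / 2) * ⟪y - a j, M (y - a j)⟫_ℝ)
        - Real.exp (-(1 / 2) * ⟪y - b j, M (y - b j)⟫_ℝ)) := by
      rw [hA, hB, Finset.sum_sub_distrib]; ring
    rw [this, abs_mul, abs_of_nonneg (by positivity : (0:ℝ) ≤ 1 / (N:ℝ))]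
    calc (1 / (N:ℝ)) * |∑ j, (Real.exp (-(1 / 2) * ⟪y - a j, M (y - a j)⟫_ℝ)
        - Real.exp (-(1 / 2) * ⟪y - b j, M (y - b j)⟫_ℝ))|
        ≤ (1 / (N:ℝ)) * ∑ j, |Real.exp (-(1 / 2) * ⟪y - a j, M (y - a j)⟫_ℝ)
          - Real.exp (-(1 / 2) * ⟪y - b j, M (y - b j)⟫_ℝ)| := by
          gcongr; exact Finset.abs_sum_le_sum_abs _ _
      _ ≤ (1 / (N:ℝ)) * ∑ _j : Fin N, (‖M‖ * K * S) := by
          gcongr with j _; exact hterm j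
      _ = ‖M‖ * K * S := by
          rw [Finset.sum_const, Finset.card_univ, Fintype.card_fin, nsmul_eq_mul,
            one_div, inv_mul_cancel_left₀ (by exact_mod_cast hN.ne' : (N:ℝ) ≠ 0)]
  calc |Real.log A - Real.log B| ≤ (1 / c) * |A - B| := log_lip hc ha hb
  _ ≤ (1 / c) * (‖M‖ * K * S) := by gcongr
  _ = (1 / c) * ‖M‖ * K * S := by ring
end
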